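/- If Π* is a strictly positive minimizer of the entropy-regularized OT problem, then there exist vectors u ∈ R^n_{>0} and v ∈ R^m_{>0} such that Π*_{ij} = u_i · exp(−C_{ij}/ε) · v_j for all i, j; that is, Π* = diag(u) K diag(v) with Gibbs kernel K_{ij} = exp(−C_{ij}/ε). -/

import Mathlib

/-- A strictly positive minimizer of the entropy-regularized OT problem
factors as `P i j = u i * exp (-C i j / ε) * v j` for some strictly positive `u, v`. -/
theorem entropic_ot_minimizer_factorization
    (n m : ℕ) (C : Matrix (Fin n) (Fin m) ℝ) (ε : ℝ) (hε : 0 < ε)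
    (r : Fin n → ℝ) (c : Fin m → ℝ)
    (hr : ∀ i, 0 < r i) (hc : ∀ j, 0 < c j)
    (hr1 : ∑ i, r i = 1) (hc1 : ∑ j, c j = 1)
    (P : Matrix (Fin n) (Fin m) ℝ)
    (hPpos : ∀ i j, 0 < P i j)
    (hPr : ∀ i, ∑ j, P i j = r i) (hPc : ∀ j, ∑ i, P i j = c j)
    (hPmin : ∀ Q : Matrix (Fin n) (Fin m) ℝ,
      ((∀ i j, 0 ≤ Q i j) ∧ (∀ i, ∑ j, Q i j = r i) ∧ (∀ j, ∑ i, Q i j = c j)) →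
      (∑ i, ∑ j, (C i j * P i j + ε * (P i j * Real.log (P i j)))) ≤
        ∑ i, ∑ j, (C i j * Q i j + ε * (Q i j * Real.log (Q i j)))) :
    ∃ (u : Fin n → ℝ) (v : Fin m → ℝ),
      (∀ i, 0 < u i) ∧ (∀ j, 0 < v j) ∧
      ∀ i j, P i j = u i * Real.exp (-C i j / ε) * v j := by
  rcases Nat.eq_zero_or_pos n with hn | hn
  · subst hn
    exact ⟨fun _ => 1, fun _ => 1, fun i => i.elim0, fun _ => one_pos, fun i => i.elim0⟩
  rcases Nat.eq_zero_or_pos m with hm | hm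
  · subst hm
    exact ⟨fun _ => 1, fun _ => 1, fun _ => one_pos, fun j => j.elim0, fun _ j => j.elim0⟩
  have i0 : Fin n := ⟨0, hn⟩
  have j0 : Fin m := ⟨0, hm⟩
  haveI : Nonempty (Fin n × Fin m) := ⟨(i0, j0)⟩
  set δ : ℝ := Finset.univ.inf' Finset.univ_nonempty (fun p : Fin n × Fin m => P p.1 p.2) with hδ
  have hδpos : 0 < δ := by
    rw [hδ, Finset.lt_inf'_iff]
    exact fun b _ => hPpos b.1 b.2
  have hδle : ∀ a b, δ ≤ P a b := fun a b =>
    Finset.inf'_le _ (Finset.mem_univ (a, b))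
  -- key separability relation
  have key : ∀ (i i' : Fin n) (j j' : Fin m),
      (C i j + ε * Real.log (P i j)) + (C i' j' + ε * Real.log (P i' j')) =
      (C i j' + ε * Real.log (P i j')) + (C i' j + ε * Real.log (P i' j)) := by
    intro i i' j j'
    set d : Fin n → Fin m → ℝ := fun a b =>
      (if a = i then (1:ℝ) else 0) * (if b = j then 1 else 0) +
      (if a = i' then 1 else 0) * (if b = j' then 1 else 0) -
      (if a = i then 1 else 0) * (if b = j' then 1 else 0) -
      (if a = i' then 1 else 0) * (if b = j then 1 else 0) with hd
    have hdrow : ∀ a, ∑ b, d a b = 0 := by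
      intro a
      simp only [hd, Finset.sum_sub_distrib, Finset.sum_add_distrib, ← Finset.mul_sum,
        Finset.sum_ite_eq', Finset.mem_univ, if_true]
      ring
    have hdcol : ∀ b, ∑ a, d a b = 0 := by
      intro b
      simp only [hd, Finset.sum_sub_distrib, Finset.sum_add_distrib, ← Finset.sum_mul,
        Finset.sum_ite_eq', Finset.mem_univ, if_true]
      ring
    have hdbd : ∀ a b, -2 ≤ d a b ∧ d a b ≤ 2 := by
      refine fun a b => ⟨?_, ?_⟩ <;> simp only [hd] <;> split_ifs <;> norm_num
    set G : ℝ → ℝ := fun t => ∑ a, ∑ b,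
      (C a b * (P a b + t * d a b) + ε * ((P a b + t * d a b) * Real.log (P a b + t * d a b)))
      with hG
    have hG0 : G 0 = ∑ a, ∑ b, (C a b * P a b + ε * (P a b * Real.log (P a b))) := by
      simp [hG]
    have hGderiv : HasDerivAt G
        (∑ a, ∑ b, (C a b + ε * (Real.log (P a b) + 1)) * d a b) 0 := by
      apply HasDerivAt.fun_sum; intro a _
      apply HasDerivAt.fun_sum; intro b _
      have hp : P a b ≠ 0 := (hPpos a b).ne'
      have h1 : HasDerivAt (fun t : ℝ => P a b + t * d a b) (d a b) 0 := by
        simpa using ((hasDerivAt_id (0:ℝ)).mul_const (d a b)).const_add (P a b)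
      have hp0 : P a b + 0 * d a b ≠ 0 := by simpa using hp
      have h2 := (Real.hasDerivAt_mul_log hp0).comp 0 h1
      simp only [Function.comp_def, zero_mul, add_zero] at h2
      have h3 := (h1.const_mul (C a b)).fun_add (h2.const_mul ε)
      convert h3 using 1
      ring
    have hmin : IsLocalMin G 0 := by
      have hball : Metric.ball (0:ℝ) (δ/2) ∈ nhds (0:ℝ) :=
        Metric.ball_mem_nhds 0 (by positivity)
      refine Filter.eventually_of_mem hball fun t ht => ?_
      rw [Metric.mem_ball, Real.dist_eq, sub_zero] at ht
      have hQ : ∀ a b, 0 ≤ P a b + t * d a b := by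
        intro a b
        have hb := hdbd a b
        have habs : |t * d a b| ≤ |t| * 2 := by
          rw [abs_mul]
          exact mul_le_mul_of_nonneg_left (abs_le.mpr ⟨hb.1, hb.2⟩) (abs_nonneg t)
        have := neg_abs_le (t * d a b)
        have := hδle a b
        linarith
      have hQr : ∀ a, ∑ b, (P a b + t * d a b) = r a := by
        intro a
        rw [Finset.sum_add_distrib, ← Finset.mul_sum, hdrow, hPr]
        ring
      have hQc : ∀ b, ∑ a, (P a b + t * d a b) = c b := by
        intro b
        rw [Finset.sum_add_distrib, ← Finset.mul_sum, hdcol, hPc]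
        ring
      rw [hG0]
      exact hPmin (fun a b => P a b + t * d a b) ⟨hQ, hQr, hQc⟩
    have hsum0 : (∑ a, ∑ b, (C a b + ε * (Real.log (P a b) + 1)) * d a b) = 0 := by
      rw [← hGderiv.deriv]
      exact hmin.deriv_eq_zero
    have hS : (∑ a, ∑ b, (C a b + ε * (Real.log (P a b) + 1)) * d a b) =
        (C i j + ε * (Real.log (P i j) + 1)) + (C i' j' + ε * (Real.log (P i' j') + 1)) -
        (C i j' + ε * (Real.log (P i j') + 1)) - (C i' j + ε * (Real.log (P i' j) + 1)) := by
      simp only [hd, mul_sub, mul_add, Finset.sum_sub_distrib, Finset.sum_add_distrib,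
        mul_ite, ite_mul, mul_one, mul_zero, zero_mul, one_mul,
        Finset.sum_ite_eq', Finset.mem_univ, if_true]
    rw [hS] at hsum0
    linarith
  -- build u and v
  refine ⟨fun i => Real.exp (C i j0 / ε + Real.log (P i j0) - (C i0 j0 / ε + Real.log (P i0 j0))),
    fun j => Real.exp (C i0 j / ε + Real.log (P i0 j)), fun _ => Real.exp_pos _,
    fun _ => Real.exp_pos _, ?_⟩
  intro i j
  rw [← Real.exp_add, ← Real.exp_add,
    show P i j = Real.exp (Real.log (P i j)) from (Real.exp_log (hPpos i j)).symm]
  congr 1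
  have hk := key i i0 j j0
  field_simp
  linarith
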